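/- arXiv:1805.10886 — 3 statements merged into one kernel-verified Lean document; each statement's English description precedes it below -/
import Mathlib

section
/- Suppose the target reward density is N(· | r̄⁽⁰⁾, σ₀²) and the source reward density is N(· | r̄⁽ʲ⁾, σⱼ²), where r̄⁽⁰⁾ ~ N(μ_{GP₀}, σ_{GP₀}²) and r̄⁽ʲ⁾ ~ N(μ_{GPⱼ}, σ_{GPⱼ}²) are independent, and σ_{GPⱼ}² < σⱼ². Then the expected importance weight w = N(r | r̄⁽⁰⁾, σ₀²)/N(r | r̄⁽ʲ⁾, σⱼ²) satisfies E[w] = (σⱼ²/(σⱼ² − σ_{GPⱼ}²)) · N(r | μ_{GP₀}, σ₀² + σ_{GP₀}²) / N(r | μ_{GPⱼ}, σⱼ² − σ_{GPⱼ}²). -/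
open MeasureTheory Real

/-- One-dimensional Gaussian density `N(x | μ, σ²)`. -/
noncomputable def gauss (μ σ2 x : ℝ) : ℝ :=
  (Real.sqrt (2 * Real.pi * σ2))⁻¹ * Real.exp (-(x - μ)^2 / (2 * σ2))

/-- Integral of a scaled, translated Gaussian. -/
lemma gauss_integral_key (A b c : ℝ) :
    ∫ x : ℝ, A * Real.exp (-(b * (x - c)^2)) = A * Real.sqrt (Real.pi / b) := by
  rw [MeasureTheory.integral_const_mul]
  congr 1
  have h2 : ∫ x : ℝ, Real.exp (-(b * x^2)) = Real.sqrt (Real.pi / b) := by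
    simpa [neg_mul] using integral_gaussian b
  calc ∫ x : ℝ, Real.exp (-(b * (x - c)^2))
      = ∫ x : ℝ, Real.exp (-(b * x^2)) :=
        MeasureTheory.integral_sub_right_eq_self (fun x => Real.exp (-(b * x^2))) c
    _ = _ := h2

/-- Gaussian convolution identity. -/
lemma conv_integral (σ2 s2 μ r : ℝ) (h1 : 0 < σ2) (h2 : 0 < s2) :
    ∫ x : ℝ, gauss x σ2 r * gauss μ s2 x = gauss μ (σ2 + s2) r := by
  have hπ := Real.pi_pos
  have hsum : 0 < σ2 + s2 := by linarith
  set b : ℝ := (σ2 + s2) / (2 * σ2 * s2) with hb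
  set c : ℝ := (s2 * r + σ2 * μ) / (σ2 + s2) with hc
  set A : ℝ := (Real.sqrt (2 * Real.pi * σ2))⁻¹ * (Real.sqrt (2 * Real.pi * s2))⁻¹ *
      Real.exp (-(r - μ)^2 / (2 * (σ2 + s2))) with hA
  have hpt : ∀ x : ℝ, gauss x σ2 r * gauss μ s2 x = A * Real.exp (-(b * (x - c)^2)) := by
    intro x
    have hexp : Real.exp (-(r - x)^2 / (2 * σ2)) * Real.exp (-(x - μ)^2 / (2 * s2)) =
        Real.exp (-(r - μ)^2 / (2 * (σ2 + s2))) * Real.exp (-(b * (x - c)^2)) := by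
      rw [← Real.exp_add, ← Real.exp_add]
      congr 1
      rw [hb, hc]
      field_simp
      ring
    unfold gauss
    rw [hA]
    linear_combination ((Real.sqrt (2 * Real.pi * σ2))⁻¹ * (Real.sqrt (2 * Real.pi * s2))⁻¹) * hexp
  rw [show (fun x : ℝ => gauss x σ2 r * gauss μ s2 x) =
      (fun x : ℝ => A * Real.exp (-(b * (x - c)^2))) from funext hpt,
    gauss_integral_key]
  -- now the constant identity
  unfold gauss
  rw [hA]
  have key : (Real.sqrt (2 * Real.pi * σ2))⁻¹ * (Real.sqrt (2 * Real.pi * s2))⁻¹ *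
      Real.sqrt (Real.pi / b) = (Real.sqrt (2 * Real.pi * (σ2 + s2)))⁻¹ := by
    rw [← Real.sqrt_inv, ← Real.sqrt_inv, ← Real.sqrt_inv,
      ← Real.sqrt_mul (by positivity), ← Real.sqrt_mul (by positivity)]
    congr 1
    rw [hb]
    field_simp
  calc (Real.sqrt (2 * Real.pi * σ2))⁻¹ * (Real.sqrt (2 * Real.pi * s2))⁻¹ *
        Real.exp (-(r - μ)^2 / (2 * (σ2 + s2))) * Real.sqrt (Real.pi / b)
      = ((Real.sqrt (2 * Real.pi * σ2))⁻¹ * (Real.sqrt (2 * Real.pi * s2))⁻¹ *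
          Real.sqrt (Real.pi / b)) * Real.exp (-(r - μ)^2 / (2 * (σ2 + s2))) := by ring
    _ = _ := by rw [key]

/-- Expectation of an inverse Gaussian density. -/
lemma inv_integral (σj2 s2 μ r : ℝ) (hj : 0 < σj2) (hs : 0 < s2) (hlt : s2 < σj2) :
    ∫ x : ℝ, (gauss x σj2 r)⁻¹ * gauss μ s2 x =
      (σj2 / (σj2 - s2)) * (gauss μ (σj2 - s2) r)⁻¹ := by
  have hπ := Real.pi_pos
  have ht : 0 < σj2 - s2 := by linarith
  set t : ℝ := σj2 - s2 with hT
  set b : ℝ := t / (2 * s2 * σj2) with hb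
  set c : ℝ := (μ * σj2 - r * s2) / t with hc
  set A : ℝ := Real.sqrt (2 * Real.pi * σj2) * (Real.sqrt (2 * Real.pi * s2))⁻¹ *
      Real.exp ((r - μ)^2 / (2 * t)) with hA
  have hpt : ∀ x : ℝ, (gauss x σj2 r)⁻¹ * gauss μ s2 x = A * Real.exp (-(b * (x - c)^2)) := by
    intro x
    have hg : (gauss x σj2 r)⁻¹ =
        Real.sqrt (2 * Real.pi * σj2) * Real.exp ((r - x)^2 / (2 * σj2)) := by
      unfold gauss
      rw [mul_inv, inv_inv, ← Real.exp_neg]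
      congr 1
      ring_nf
    rw [hg]
    have hexp : Real.exp ((r - x)^2 / (2 * σj2)) * Real.exp (-(x - μ)^2 / (2 * s2)) =
        Real.exp ((r - μ)^2 / (2 * t)) * Real.exp (-(b * (x - c)^2)) := by
      rw [← Real.exp_add, ← Real.exp_add]
      congr 1
      rw [hb, hc, hT]
      field_simp [(sub_pos.mpr hlt).ne']
      ring
    unfold gauss
    rw [hA]
    linear_combination (Real.sqrt (2 * Real.pi * σj2) * (Real.sqrt (2 * Real.pi * s2))⁻¹) * hexp
  rw [show (fun x : ℝ => (gauss x σj2 r)⁻¹ * gauss μ s2 x) =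
      (fun x : ℝ => A * Real.exp (-(b * (x - c)^2))) from funext hpt,
    gauss_integral_key]
  have hginv : (gauss μ t r)⁻¹ =
      Real.sqrt (2 * Real.pi * t) * Real.exp ((r - μ)^2 / (2 * t)) := by
    unfold gauss
    rw [mul_inv, inv_inv, ← Real.exp_neg]
    congr 1
    ring_nf
  rw [hginv, hA]
  have key : Real.sqrt (2 * Real.pi * σj2) * (Real.sqrt (2 * Real.pi * s2))⁻¹ *
      Real.sqrt (Real.pi / b) = σj2 / t * Real.sqrt (2 * Real.pi * t) := by
    have hst : σj2 / t = Real.sqrt ((σj2 / t)^2) := (Real.sqrt_sq (by positivity)).symm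
    rw [hst, ← Real.sqrt_inv,
      ← Real.sqrt_mul (by positivity), ← Real.sqrt_mul (by positivity),
      ← Real.sqrt_mul (by positivity)]
    congr 1
    rw [hb]
    field_simp
  calc Real.sqrt (2 * Real.pi * σj2) * (Real.sqrt (2 * Real.pi * s2))⁻¹ *
        Real.exp ((r - μ)^2 / (2 * t)) * Real.sqrt (Real.pi / b)
      = (Real.sqrt (2 * Real.pi * σj2) * (Real.sqrt (2 * Real.pi * s2))⁻¹ *
          Real.sqrt (Real.pi / b)) * Real.exp ((r - μ)^2 / (2 * t)) := by ring
    _ = _ := by rw [key]; ring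

/-- Expected importance weight for Gaussian reward models. The weight
`w = N(r | r̄⁽⁰⁾, σ₀²)/N(r | r̄⁽ʲ⁾, σⱼ²)` with independent Gaussian-distributed means
`r̄⁽⁰⁾ ~ N(μ_GP₀, σ_GP₀²)`, `r̄⁽ʲ⁾ ~ N(μ_GPⱼ, σ_GPⱼ²)` has expectation
`(σⱼ²/(σⱼ² − σ_GPⱼ²)) · N(r | μ_GP₀, σ₀² + σ_GP₀²) / N(r | μ_GPⱼ, σⱼ² − σ_GPⱼ²)`. -/
theorem expected_importance_weight_gaussian
    (σ₀2 σj2 σGP₀2 σGPj2 μGP₀ μGPj r : ℝ)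
    (h₀ : 0 < σ₀2) (hj : 0 < σj2) (hGP₀ : 0 < σGP₀2) (hGPj : 0 < σGPj2)
    (hlt : σGPj2 < σj2) :
    (∫ r0 : ℝ, ∫ rj : ℝ,
        (gauss r0 σ₀2 r / gauss rj σj2 r) * gauss μGP₀ σGP₀2 r0 * gauss μGPj σGPj2 rj) =
      (σj2 / (σj2 - σGPj2)) *
        (gauss μGP₀ (σ₀2 + σGP₀2) r / gauss μGPj (σj2 - σGPj2) r) := by
  have hinner : ∀ r0 : ℝ, (∫ rj : ℝ,
      (gauss r0 σ₀2 r / gauss rj σj2 r) * gauss μGP₀ σGP₀2 r0 * gauss μGPj σGPj2 rj) =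
      (gauss r0 σ₀2 r * gauss μGP₀ σGP₀2 r0) *
        ((σj2 / (σj2 - σGPj2)) * (gauss μGPj (σj2 - σGPj2) r)⁻¹) := by
    intro r0
    have : (fun rj : ℝ =>
        (gauss r0 σ₀2 r / gauss rj σj2 r) * gauss μGP₀ σGP₀2 r0 * gauss μGPj σGPj2 rj) =
        (fun rj : ℝ => (gauss r0 σ₀2 r * gauss μGP₀ σGP₀2 r0) *
          ((gauss rj σj2 r)⁻¹ * gauss μGPj σGPj2 rj)) := by
      funext rj; rw [div_eq_mul_inv]; ring
    rw [this, MeasureTheory.integral_const_mul, inv_integral σj2 σGPj2 μGPj r hj hGPj hlt]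
  rw [show (fun r0 : ℝ => ∫ rj : ℝ,
      (gauss r0 σ₀2 r / gauss rj σj2 r) * gauss μGP₀ σGP₀2 r0 * gauss μGPj σGPj2 rj) =
      (fun r0 : ℝ => (gauss r0 σ₀2 r * gauss μGP₀ σGP₀2 r0) *
        ((σj2 / (σj2 - σGPj2)) * (gauss μGPj (σj2 - σGPj2) r)⁻¹)) from funext hinner,
    MeasureTheory.integral_mul_const, conv_integral σ₀2 σGP₀2 μGP₀ r h₀ hGP₀,
    div_eq_mul_inv]
  ring
end

section
/- Under the assumptions of the previous statement applied componentwise, if the D-dimensional transition densities are products of independent univariate Gaussians with componentwise random means that are independent across components and tasks, then the expected importance weight factorizes: E[∏_{d=1}^D w_d] = ∏_{d=1}^D E[w_d], and each E[w_d] = (δ_{j,d}²/(δ_{j,d}² − σ_{GP_{j,d}}²)) · N(s'_d | μ_{GP_{0,d}}, δ_{0,d}² + σ_{GP_{0,d}}²) / N(s'_d | μ_{GP_{j,d}}, δ_{j,d}² − σ_{GP_{j,d}}²), provided σ_{GP_{j,d}}² < δ_{j,d}² for all d. -/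
open MeasureTheory Real

lemma integral_K_gauss (K b m : ℝ) : ∫ x : ℝ, K * Real.exp (-(b * (x - m)^2)) = K * Real.sqrt (π / b) := by
  rw [MeasureTheory.integral_const_mul]
  congr 1
  calc ∫ x : ℝ, Real.exp (-(b * (x - m)^2))
      = ∫ x : ℝ, Real.exp (-b * x^2) := by
        rw [← integral_sub_right_eq_self (fun x => Real.exp (-b * x^2)) m]
        simp only [neg_mul]
    _ = Real.sqrt (π / b) := integral_gaussian b

lemma conv_integral_s5 (a σ μ s : ℝ) (ha : 0 < a) (hσ : 0 < σ) :
    ∫ x : ℝ, gauss x a s * gauss μ σ x = gauss μ (a + σ) s := by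
  have hπ := Real.pi_pos
  have has : 0 < a + σ := by linarith
  have h1 : ∀ x : ℝ, gauss x a s * gauss μ σ x =
      ((Real.sqrt (2*π*a))⁻¹ * (Real.sqrt (2*π*σ))⁻¹ * Real.exp (-(s-μ)^2 / (2*(a+σ)))) *
        Real.exp (-(((a+σ)/(2*a*σ)) * (x - (s*σ + μ*a)/(a+σ))^2)) := by
    intro x
    simp only [gauss]
    have he : Real.exp (-(s - x)^2 / (2*a)) * Real.exp (-(x - μ)^2 / (2*σ)) =
        Real.exp (-(s-μ)^2 / (2*(a+σ))) *
          Real.exp (-(((a+σ)/(2*a*σ)) * (x - (s*σ + μ*a)/(a+σ))^2)) := by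
      rw [← Real.exp_add, ← Real.exp_add]
      congr 1
      field_simp
      ring
    linear_combination ((Real.sqrt (2*π*a))⁻¹ * (Real.sqrt (2*π*σ))⁻¹) * he
  simp_rw [h1]
  rw [integral_K_gauss]
  simp only [gauss]
  have hs : (Real.sqrt (2*π*a))⁻¹ * (Real.sqrt (2*π*σ))⁻¹ * Real.sqrt (π / ((a+σ)/(2*a*σ))) =
      (Real.sqrt (2*π*(a+σ)))⁻¹ := by
    rw [← Real.sqrt_inv, ← Real.sqrt_inv, ← Real.sqrt_inv,
      ← Real.sqrt_mul (by positivity), ← Real.sqrt_mul (by positivity)]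
    congr 1
    field_simp
  linear_combination Real.exp (-(s-μ)^2 / (2*(a+σ))) * hs

lemma ratio_integral (b σ μ s : ℝ) (hσ : 0 < σ) (hlt : σ < b) :
    ∫ y : ℝ, gauss μ σ y / gauss y b s = (b/(b-σ)) / gauss μ (b-σ) s := by
  have hπ := Real.pi_pos
  have hb : 0 < b := lt_trans hσ hlt
  have hbs : 0 < b - σ := by linarith
  have h1 : ∀ y : ℝ, gauss μ σ y / gauss y b s =
      (Real.sqrt (2*π*b) * (Real.sqrt (2*π*σ))⁻¹ * Real.exp ((s-μ)^2 / (2*(b-σ)))) *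
        Real.exp (-(((b-σ)/(2*σ*b)) * (y - (μ*b - s*σ)/(b-σ))^2)) := by
    intro y
    simp only [gauss]
    have he : Real.exp (-(y - μ)^2 / (2*σ)) * (Real.exp (-(s - y)^2 / (2*b)))⁻¹ =
        Real.exp ((s-μ)^2 / (2*(b-σ))) *
          Real.exp (-(((b-σ)/(2*σ*b)) * (y - (μ*b - s*σ)/(b-σ))^2)) := by
      rw [← Real.exp_neg, ← Real.exp_add, ← Real.exp_add]
      congr 1
      field_simp
      ring
    rw [div_eq_mul_inv, mul_inv, inv_inv]
    linear_combination (Real.sqrt (2*π*b) * (Real.sqrt (2*π*σ))⁻¹) * he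
  simp_rw [h1]
  rw [integral_K_gauss]
  simp only [gauss]
  have hs : Real.sqrt (2*π*b) * (Real.sqrt (2*π*σ))⁻¹ * Real.sqrt (π / ((b-σ)/(2*σ*b))) =
      (b/(b-σ)) * Real.sqrt (2*π*(b-σ)) := by
    rw [show b/(b-σ) = Real.sqrt ((b/(b-σ))^2) from (Real.sqrt_sq (by positivity)).symm,
      ← Real.sqrt_inv, ← Real.sqrt_mul (by positivity), ← Real.sqrt_mul (by positivity),
      ← Real.sqrt_mul (by positivity)]
    congr 1
    field_simp
  rw [neg_div, Real.exp_neg]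
  conv_rhs => rw [div_eq_mul_inv, mul_inv, inv_inv, inv_inv]
  linear_combination Real.exp ((s-μ)^2 / (2*(b-σ))) * hs


lemma double_integral (a b σ0 σj μ0 μj s : ℝ) :
    (∫ x : ℝ, ∫ y : ℝ, (gauss x a s / gauss y b s) * gauss μ0 σ0 x * gauss μj σj y) =
      (∫ x : ℝ, gauss x a s * gauss μ0 σ0 x) * ∫ y : ℝ, gauss μj σj y / gauss y b s := by
  calc (∫ x : ℝ, ∫ y : ℝ, (gauss x a s / gauss y b s) * gauss μ0 σ0 x * gauss μj σj y)
      = ∫ x : ℝ, (gauss x a s * gauss μ0 σ0 x) * ∫ y : ℝ, gauss μj σj y / gauss y b s := by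
        congr 1; funext x
        rw [← MeasureTheory.integral_const_mul]
        congr 1; funext y
        ring
    _ = (∫ x : ℝ, gauss x a s * gauss μ0 σ0 x) * ∫ y : ℝ, gauss μj σj y / gauss y b s := by
        rw [MeasureTheory.integral_mul_const]


/-- Transition weights in Gaussian models with diagonal covariance: if the `D`-dimensional
transition densities are products of independent univariate Gaussians with componentwise
independent Gaussian-distributed means, then the expected importance weight factorizes as
a product over components, each given by the closed form
`(δ_{j,d}²/(δ_{j,d}² − σ_{GP_{j,d}}²)) · N(s'_d | μ_{GP_{0,d}}, δ_{0,d}² + σ_{GP_{0,d}}²)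
  / N(s'_d | μ_{GP_{j,d}}, δ_{j,d}² − σ_{GP_{j,d}}²)`. -/
theorem expected_transition_weight_gaussian
    (D : ℕ) (δ0 δj σGP0 σGPj μGP0 μGPj s' : Fin D → ℝ)
    (h0 : ∀ d, 0 < δ0 d) (hj : ∀ d, 0 < δj d)
    (hGP0 : ∀ d, 0 < σGP0 d) (hGPj : ∀ d, 0 < σGPj d)
    (hlt : ∀ d, σGPj d < δj d) :
    (∫ p0 : Fin D → ℝ, ∫ pj : Fin D → ℝ,
        (∏ d, gauss (p0 d) (δ0 d) (s' d) / gauss (pj d) (δj d) (s' d)) *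
          (∏ d, gauss (μGP0 d) (σGP0 d) (p0 d)) * (∏ d, gauss (μGPj d) (σGPj d) (pj d))) =
      ∏ d, (∫ x : ℝ, ∫ y : ℝ,
        (gauss x (δ0 d) (s' d) / gauss y (δj d) (s' d)) *
          gauss (μGP0 d) (σGP0 d) x * gauss (μGPj d) (σGPj d) y) ∧
    ∀ d, (∫ x : ℝ, ∫ y : ℝ,
        (gauss x (δ0 d) (s' d) / gauss y (δj d) (s' d)) *
          gauss (μGP0 d) (σGP0 d) x * gauss (μGPj d) (σGPj d) y) =
      (δj d / (δj d - σGPj d)) *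
        (gauss (μGP0 d) (δ0 d + σGP0 d) (s' d) / gauss (μGPj d) (δj d - σGPj d) (s' d)) := by
  have key : ∀ d : Fin D, (∫ x : ℝ, ∫ y : ℝ,
      (gauss x (δ0 d) (s' d) / gauss y (δj d) (s' d)) *
        gauss (μGP0 d) (σGP0 d) x * gauss (μGPj d) (σGPj d) y) =
      (∫ x : ℝ, gauss x (δ0 d) (s' d) * gauss (μGP0 d) (σGP0 d) x) *
        ∫ y : ℝ, gauss (μGPj d) (σGPj d) y / gauss y (δj d) (s' d) :=
    fun d => double_integral _ _ _ _ _ _ _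
  constructor
  · calc (∫ p0 : Fin D → ℝ, ∫ pj : Fin D → ℝ,
        (∏ d, gauss (p0 d) (δ0 d) (s' d) / gauss (pj d) (δj d) (s' d)) *
          (∏ d, gauss (μGP0 d) (σGP0 d) (p0 d)) * (∏ d, gauss (μGPj d) (σGPj d) (pj d)))
        = ∫ p0 : Fin D → ℝ,
            (∏ d, gauss (p0 d) (δ0 d) (s' d) * gauss (μGP0 d) (σGP0 d) (p0 d)) *
              ∏ d, ∫ y : ℝ, gauss (μGPj d) (σGPj d) y / gauss y (δj d) (s' d) := by
          congr 1; funext p0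
          calc (∫ pj : Fin D → ℝ,
              (∏ d, gauss (p0 d) (δ0 d) (s' d) / gauss (pj d) (δj d) (s' d)) *
                (∏ d, gauss (μGP0 d) (σGP0 d) (p0 d)) * (∏ d, gauss (μGPj d) (σGPj d) (pj d)))
              = ∫ pj : Fin D → ℝ,
                  (∏ d, gauss (p0 d) (δ0 d) (s' d) * gauss (μGP0 d) (σGP0 d) (p0 d)) *
                    ∏ d, gauss (μGPj d) (σGPj d) (pj d) / gauss (pj d) (δj d) (s' d) := by
                congr 1; funext pj
                simp only [Finset.prod_div_distrib, Finset.prod_mul_distrib]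
                ring
            _ = (∏ d, gauss (p0 d) (δ0 d) (s' d) * gauss (μGP0 d) (σGP0 d) (p0 d)) *
                  ∏ d, ∫ y : ℝ, gauss (μGPj d) (σGPj d) y / gauss y (δj d) (s' d) := by
                rw [MeasureTheory.integral_const_mul,
                  MeasureTheory.integral_fintype_prod_volume_eq_prod (ι := Fin D)
                    (fun d y => gauss (μGPj d) (σGPj d) y / gauss y (δj d) (s' d))]
      _ = (∏ d, ∫ x : ℝ, gauss x (δ0 d) (s' d) * gauss (μGP0 d) (σGP0 d) x) *
            ∏ d, ∫ y : ℝ, gauss (μGPj d) (σGPj d) y / gauss y (δj d) (s' d) := by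
          rw [MeasureTheory.integral_mul_const,
            MeasureTheory.integral_fintype_prod_volume_eq_prod (ι := Fin D)
              (fun d x => gauss x (δ0 d) (s' d) * gauss (μGP0 d) (σGP0 d) x)]
      _ = ∏ d, ((∫ x : ℝ, gauss x (δ0 d) (s' d) * gauss (μGP0 d) (σGP0 d) x) *
            ∫ y : ℝ, gauss (μGPj d) (σGPj d) y / gauss y (δj d) (s' d)) :=
          (Finset.prod_mul_distrib).symm
      _ = _ := Finset.prod_congr rfl fun d _ => (key d).symm
  · intro d
    rw [key d, conv_integral_s5 _ _ _ _ (h0 d) (hGP0 d),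
      ratio_integral _ _ _ _ (hGPj d) (hlt d)]
    ring
end

section
/- Let μ be a probability measure on X, let q(·|x) be a conditional density on Y, let w̃ : X × Y → ℝ≥0 be measurable and let f : X → ℝ be bounded. Define the expected weighted squared loss E_Q[w̃(X,Y)|f(X)−Y|²] where Q(dx,dy) = μ(dx)q(dy|x). Then E_Q[w̃(X,Y)|f(X)−Y|²] = ‖f − h̃‖²_μ + E_μ[f(X)² (E_q[w̃(X,Y)|X] − 1)] + K, where h̃(x) = E_q[w̃(x,Y)Y | x] and K = E_μ[E_q[w̃(X,Y)Y²|X] − E_q[w̃(X,Y)Y|X]²] is independent of f. -/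
open MeasureTheory

/-- Bias decomposition of the weighted squared loss: with `Q(dx,dy) = μ(dx) q(y|x) dy`,
`E_Q[w̃(X,Y)|f(X)−Y|²] = ‖f − h̃‖²_μ + E_μ[f(X)²(E_q[w̃|X] − 1)] + K`, where
`h̃(x) = E_q[w̃(x,Y)Y | x]` and `K = E_μ[E_q[w̃ Y²|X] − E_q[w̃ Y|X]²]` does not depend on `f`. -/
theorem weighted_squared_loss_decomposition
    {X : Type*} [MeasurableSpace X] (μ : Measure X) [IsProbabilityMeasure μ]
    (q : X → ℝ → ℝ) (hq0 : ∀ x y, 0 ≤ q x y) (hq1 : ∀ x, ∫ y, q x y = 1)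
    (w : X → ℝ → ℝ) (hw0 : ∀ x y, 0 ≤ w x y)
    (f : X → ℝ) (Fmax : ℝ) (hf : ∀ x, |f x| ≤ Fmax)
    (hInt0 : ∀ x, Integrable (fun y => w x y * q x y))
    (hInt1 : ∀ x, Integrable (fun y => w x y * y * q x y))
    (hInt2 : ∀ x, Integrable (fun y => w x y * y ^ 2 * q x y))
    (hIntL : Integrable (fun x => ∫ y, w x y * (f x - y) ^ 2 * q x y) μ)
    (hIntA : Integrable (fun x => (f x - ∫ y, w x y * y * q x y) ^ 2) μ)
    (hIntB : Integrable (fun x => f x ^ 2 * ((∫ y, w x y * q x y) - 1)) μ)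
    (hIntK : Integrable
      (fun x => (∫ y, w x y * y ^ 2 * q x y) - (∫ y, w x y * y * q x y) ^ 2) μ) :
    (∫ x, (∫ y, w x y * (f x - y) ^ 2 * q x y) ∂μ) =
      (∫ x, (f x - ∫ y, w x y * y * q x y) ^ 2 ∂μ) +
        (∫ x, f x ^ 2 * ((∫ y, w x y * q x y) - 1) ∂μ) +
        (∫ x, ((∫ y, w x y * y ^ 2 * q x y) - (∫ y, w x y * y * q x y) ^ 2) ∂μ) := by
  have hAB : Integrable (fun x => (f x - ∫ y, w x y * y * q x y) ^ 2
      + f x ^ 2 * ((∫ y, w x y * q x y) - 1)) μ := hIntA.add hIntB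
  rw [← integral_add hIntA hIntB, ← integral_add hAB hIntK]
  refine integral_congr_ae (Filter.Eventually.of_forall fun x => ?_)
  have key : (∫ y, w x y * (f x - y) ^ 2 * q x y) =
      f x ^ 2 * (∫ y, w x y * q x y) - 2 * f x * (∫ y, w x y * y * q x y)
        + (∫ y, w x y * y ^ 2 * q x y) := by
    have h1 : (∫ y, w x y * (f x - y) ^ 2 * q x y) =
        ∫ y, (f x ^ 2 * (w x y * q x y) - 2 * f x * (w x y * y * q x y)
          + w x y * y ^ 2 * q x y) := by
      congr 1; funext y; ring
    have hs : Integrable (fun y => f x ^ 2 * (w x y * q x y)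
        - 2 * f x * (w x y * y * q x y)) := ((hInt0 x).const_mul _).sub ((hInt1 x).const_mul _)
    have ha : Integrable (fun y => f x ^ 2 * (w x y * q x y)) := (hInt0 x).const_mul _
    have hb : Integrable (fun y => 2 * f x * (w x y * y * q x y)) := (hInt1 x).const_mul _
    rw [h1, integral_add hs (hInt2 x), integral_sub ha hb,
      integral_const_mul, integral_const_mul]
  simp only []
  rw [key]; ring
end
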